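/- Let X be a σ-locally compact Hausdorff space and Y a complete metric space. A set K ⊆ BC(X,Y) is relatively compact in the uniform topology if and only if (1) K is pointwise relatively compact and equicontinuous at every point of X, and (2) K satisfies the BC-extension condition. -/

import Mathlib

open BoundedContinuousFunction

set_option maxHeartbeats 1000000 in
/-- Finite δ-net on a compact set, from pointwise relative compactness and
equicontinuity. -/
lemma net_on_compact {X Y : Type*} [TopologicalSpace X] [MetricSpace Y]
    (K : Set (X →ᵇ Y))
    (hpt : ∀ x : X, IsCompact (closure ((fun f : X →ᵇ Y => f x) '' K)))
    (heq : ∀ x : X, EquicontinuousAt (fun f : K => ((f : X →ᵇ Y) : X → Y)) x)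
    {D : Set X} (hD : IsCompact D) {δ : ℝ} (hδ : 0 < δ) :
    ∃ T : Set (X →ᵇ Y), T.Finite ∧ T ⊆ K ∧
      ∀ f ∈ K, ∃ g ∈ T, ∀ x ∈ D, dist (f x) (g x) ≤ δ := by
  classical
  rcases K.eq_empty_or_nonempty with rfl | ⟨f₀, hf₀⟩
  · exact ⟨∅, Set.finite_empty, Set.Subset.rfl, by simp⟩
  -- equicontinuity neighborhoods
  have hU : ∀ x : X, ∃ U ∈ nhds x, ∀ y ∈ U, ∀ f ∈ K,
      dist (f x) (f y) < δ / 4 := by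
    intro x
    have := (Metric.equicontinuousAt_iff_right.mp (heq x)) (δ / 4) (by linarith)
    rcases this.exists_mem with ⟨U, hU, hU'⟩
    exact ⟨U, hU, fun y hy f hf => hU' y hy ⟨f, hf⟩⟩
  choose U hUmem hUprop using hU
  rcases hD.elim_nhds_subcover U (fun x _ => hUmem x) with ⟨t, htD, htcov⟩
  -- the evaluation map into the finite product
  set Φ : (X →ᵇ Y) → (↥t → Y) := fun f j => f j.1 with hΦ
  have hsub : Φ '' K ⊆ Set.pi Set.univ
      (fun j : ↥t => closure ((fun f : X →ᵇ Y => f j.1) '' K)) := by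
    rintro _ ⟨f, hf, rfl⟩ j _
    exact subset_closure ⟨f, hf, rfl⟩
  have htb : TotallyBounded (Φ '' K) :=
    ((isCompact_univ_pi fun j : ↥t => hpt j.1).totallyBounded).subset hsub
  rw [totallyBounded_iff_subset] at htb
  rcases htb {p | dist p.1 p.2 < δ / 4} (Metric.dist_mem_uniformity (by linarith))
    with ⟨s, hsub', hsfin, hscov⟩
  -- choose preimages in K
  have : ∀ y ∈ s, ∃ g ∈ K, Φ g = y := by
    intro y hy; rcases hsub' hy with ⟨g, hg, rfl⟩; exact ⟨g, hg, rfl⟩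
  have hne : Nonempty (X →ᵇ Y) := ⟨f₀⟩
  choose! g hgK hgΦ using this
  refine ⟨g '' s, hsfin.image _, by rintro _ ⟨y, hy, rfl⟩; exact hgK y hy, ?_⟩
  intro f hf
  rcases Set.mem_iUnion₂.mp (hscov ⟨f, hf, rfl⟩) with ⟨y, hy, hfy⟩
  refine ⟨g y, Set.mem_image_of_mem _ hy, ?_⟩
  intro x hx
  rcases Set.mem_iUnion₂.mp (htcov hx) with ⟨z, hz, hxz⟩
  have h1 : dist (f z) (f x) < δ / 4 := hUprop z x hxz f hf
  have h3 : dist ((g y) z) ((g y) x) < δ / 4 := hUprop z x hxz (g y) (hgK y hy)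
  have h2 : dist (f z) ((g y) z) < δ / 4 := by
    have := (dist_le_pi_dist (Φ f) y ⟨z, hz⟩).trans_lt hfy
    rwa [← hgΦ y hy] at this
  calc dist (f x) ((g y) x) ≤ dist (f x) (f z) + dist (f z) ((g y) z)
        + dist ((g y) z) ((g y) x) := dist_triangle4 _ _ _ _
    _ ≤ δ := by rw [dist_comm (f x) (f z)]; linarith

/-- Arzelà–Ascoli for σ-locally compact Hausdorff `X` and complete metric `Y`:
`K ⊆ BC(X,Y)` is relatively compact iff it is pointwise relatively compact,
equicontinuous at every point, and satisfies the BC-extension condition. -/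
theorem arzela_ascoli_sigma_locally_compact_iff
    {X Y : Type*} [TopologicalSpace X] [T2Space X] [LocallyCompactSpace X]
    [SigmaCompactSpace X] [MetricSpace Y] [CompleteSpace Y]
    (K : Set (X →ᵇ Y)) :
    IsCompact (closure K) ↔
      ((∀ x : X, IsCompact (closure ((fun f : X →ᵇ Y => f x) '' K))) ∧
        (∀ x : X, EquicontinuousAt (fun f : K => ((f : X →ᵇ Y) : X → Y)) x)) ∧
      (∀ ε > (0 : ℝ), ∃ (D : Set X) (δ : ℝ), IsCompact D ∧ 0 < δ ∧
        ∀ f ∈ K, ∀ g ∈ K, (∀ x ∈ D, dist (f x) (g x) ≤ δ) → dist f g ≤ ε) := by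
  classical
  constructor
  · intro hcl
    have hKtb : TotallyBounded K :=
      hcl.totallyBounded.subset subset_closure
    refine ⟨⟨?_, ?_⟩, ?_⟩
    · -- pointwise relative compactness
      intro x
      have hc : Continuous fun f : X →ᵇ Y => f x := (BoundedContinuousFunction.lipschitz_eval_const x).continuous
      have himg : IsCompact ((fun f : X →ᵇ Y => f x) '' closure K) := hcl.image hc
      exact himg.of_isClosed_subset isClosed_closure
        (closure_minimal (Set.image_mono subset_closure) himg.isClosed)
    · -- equicontinuity
      intro x
      rw [Metric.equicontinuousAt_iff_right]
      intro ε hε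
      rcases (Metric.totallyBounded_iff.mp hKtb) (ε / 3) (by linarith) with
        ⟨s, hsfin, hscov⟩
      have hV : ∀ h : X →ᵇ Y, ∀ᶠ y in nhds x, dist (h x) (h y) < ε / 3 := by
        intro h
        have : ContinuousAt h x := h.continuous.continuousAt
        have := this (Metric.ball_mem_nhds (h x) (by positivity : (0:ℝ) < ε / 3))
        filter_upwards [this] with y hy using by
          rw [dist_comm]; simpa [Metric.mem_ball] using hy
      have : ∀ᶠ y in nhds x, ∀ h ∈ s, dist (h x) (h y) < ε / 3 :=
        (Filter.eventually_all_finite hsfin).mpr fun h _ => hV h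
      filter_upwards [this] with y hy i
      obtain ⟨f, hf⟩ := i
      rcases Set.mem_iUnion₂.mp (hscov hf) with ⟨h, hhs, hfh⟩
      have h1 : dist (f x) (h x) ≤ dist f h := dist_coe_le_dist x
      have h3 : dist (h y) (f y) ≤ dist h f := dist_coe_le_dist y
      have hfh' : dist f h < ε / 3 := hfh
      have h2 := hy h hhs
      calc dist (f x) (f y) ≤ dist (f x) (h x) + dist (h x) (h y) + dist (h y) (f y) :=
            dist_triangle4 _ _ _ _
        _ < ε := by rw [dist_comm h f] at h3; linarith
    · -- BC-extension condition
      intro ε hε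
      by_cases hX : Nonempty X
      · rcases (Metric.totallyBounded_iff.mp hKtb) (ε / 5) (by linarith) with
          ⟨s, hsfin, hscov⟩
        -- witness points for pairs of centers that are far apart
        have hw : ∀ p : (X →ᵇ Y) × (X →ᵇ Y), ∃ x : X,
            ¬ dist p.1 p.2 ≤ 3 * ε / 5 → ¬ dist (p.1 x) (p.2 x) ≤ 3 * ε / 5 := by
          intro p
          by_cases hp : dist p.1 p.2 ≤ 3 * ε / 5
          · exact ⟨Classical.arbitrary X, fun h => absurd hp h⟩
          · have : ¬ ∀ x, dist (p.1 x) (p.2 x) ≤ 3 * ε / 5 := fun h =>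
              hp ((BoundedContinuousFunction.dist_le (by linarith)).mpr h)
            push_neg at this
            rcases this with ⟨x, hx⟩
            exact ⟨x, fun _ => by intro h; exact absurd h (not_le.mpr hx)⟩
        choose w hwprop using hw
        refine ⟨w '' (s ×ˢ s), ε / 5, ((hsfin.prod hsfin).image w).isCompact,
          by linarith, ?_⟩
        intro f hf g hg hclose
        rcases Set.mem_iUnion₂.mp (hscov hf) with ⟨a, has, hfa⟩
        rcases Set.mem_iUnion₂.mp (hscov hg) with ⟨b, hbs, hgb⟩
        have hfa' : dist f a < ε / 5 := hfa
        have hgb' : dist g b < ε / 5 := hgb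
        have hab : dist a b ≤ 3 * ε / 5 := by
          by_contra hab
          have hx := hwprop (a, b) hab
          have hxD : w (a, b) ∈ w '' (s ×ˢ s) :=
            Set.mem_image_of_mem _ (Set.mk_mem_prod has hbs)
          have h2 := hclose _ hxD
          have h1 : dist (f (w (a, b))) (a (w (a, b))) ≤ dist f a :=
            dist_coe_le_dist _
          have h3 : dist (g (w (a, b))) (b (w (a, b))) ≤ dist g b :=
            dist_coe_le_dist _
          apply hx
          calc dist (a (w (a, b))) (b (w (a, b)))
              ≤ dist (a (w (a, b))) (f (w (a, b))) + dist (f (w (a, b))) (g (w (a, b)))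
                + dist (g (w (a, b))) (b (w (a, b))) := dist_triangle4 _ _ _ _
            _ ≤ 3 * ε / 5 := by rw [dist_comm (a _) (f _)]; linarith
        calc dist f g ≤ dist f a + dist a b + dist b g := dist_triangle4 _ _ _ _
          _ ≤ ε := by rw [dist_comm b g]; linarith
      · -- X empty
        refine ⟨∅, 1, isCompact_empty, one_pos, fun f _ g _ _ => ?_⟩
        rw [not_nonempty_iff] at hX
        rw [BoundedContinuousFunction.dist_zero_of_empty]
        linarith
  · rintro ⟨⟨hpt, heq⟩, hext⟩
    refine TotallyBounded.isCompact_of_isClosed ((?_ : TotallyBounded K).closure)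
      isClosed_closure
    rw [Metric.totallyBounded_iff]
    intro ε hε
    rcases hext (ε / 2) (by linarith) with ⟨D, δ, hD, hδ, hKδ⟩
    rcases net_on_compact K hpt heq hD hδ with ⟨T, hTfin, hTK, hTnet⟩
    refine ⟨T, hTfin, ?_⟩
    intro f hf
    rcases hTnet f hf with ⟨g, hgT, hgδ⟩
    exact Set.mem_iUnion₂.mpr ⟨g, hgT,
      Metric.mem_ball.mpr ((hKδ f hf g (hTK hgT) hgδ).trans_lt (by linarith))⟩
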